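/- For x > 1, the functions g(x) = (1/2){ln((x−1)/(e·ln x)) + (ln x)/(x−1)} and h(x) = ln((x+1)/(2√x)) satisfy g(x) ≤ h(x) ≤ 2g(x); equivalently, the ratio CI₂/CI₁ of the full-observation to the 1-dimensional optimal-projection Chernoff information for two Gaussian trees differing by a single edge-grafting operation lies in [1, 2]. -/

import Mathlib

/-- The scalar Gaussian Chernoff information (1-dim optimal projection). -/
noncomputable def gFun (x : ℝ) : ℝ :=
  (1/2) * (Real.log ((x - 1) / (Real.exp 1 * Real.log x)) + Real.log x / (x - 1))

/-- The full-observation Chernoff information. -/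
noncomputable def hFun (x : ℝ) : ℝ := Real.log ((x + 1) / (2 * Real.sqrt x))

/-- Key inequality: `(1 - t) * exp (2t) ≤ 1 + t` for `t ≥ 0` (equivalently `tanh t ≤ t`). -/
lemma key_ineq (t : ℝ) (ht : 0 ≤ t) : (1 - t) * Real.exp (2 * t) ≤ 1 + t := by
  set f : ℝ → ℝ := fun y => 1 + y - (1 - y) * Real.exp (2 * y) with hf
  have hderiv : ∀ s : ℝ, HasDerivAt f (1 - (1 - 2 * s) * Real.exp (2 * s)) s := by
    intro s
    have h1 : HasDerivAt (fun y : ℝ => Real.exp (2 * y)) (Real.exp (2 * s) * 2) s := by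
      have := (Real.hasDerivAt_exp (2 * s)).comp s ((hasDerivAt_id s).const_mul 2)
      simpa [Function.comp_def] using this
    have h2 : HasDerivAt (fun y : ℝ => (1 - y)) (-1 : ℝ) s := by
      simpa using ((hasDerivAt_id s).const_sub 1)
    have h3 : HasDerivAt (fun y : ℝ => (1 - y) * Real.exp (2 * y))
        ((-1) * Real.exp (2 * s) + (1 - s) * (Real.exp (2 * s) * 2)) s := h2.mul h1
    have h4 : HasDerivAt (fun y : ℝ => 1 + y) (1 : ℝ) s := by
      simpa using (hasDerivAt_id s).const_add 1
    have := h4.sub h3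
    refine this.congr_deriv ?_
    ring
  have hmono : MonotoneOn f (Set.Ici (0 : ℝ)) := by
    apply monotoneOn_of_deriv_nonneg (convex_Ici 0)
    · exact Continuous.continuousOn (by
        have : Continuous f := by
          apply Continuous.sub
          · exact continuous_const.add continuous_id
          · exact (continuous_const.sub continuous_id).mul
              (Real.continuous_exp.comp (continuous_const.mul continuous_id))
        exact this)
    · intro s _
      exact (hderiv s).differentiableAt.differentiableWithinAt
    · intro s hs
      rw [(hderiv s).deriv]
      have hexp : (1 - 2 * s) * Real.exp (2 * s) ≤ 1 := by
        have h5 := Real.add_one_le_exp (-(2 * s))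
        have h6 : Real.exp (-(2 * s)) * Real.exp (2 * s) = 1 := by
          rw [← Real.exp_add]; simp
        nlinarith [Real.exp_pos (2 * s)]
      linarith
  have h0 : f 0 = 0 := by simp [hf]
  have := hmono (Set.self_mem_Ici) (Set.mem_Ici.mpr ht) ht
  rw [h0] at this
  simp only [hf] at this
  linarith

/-- `g(x) ≤ h(x) ≤ 2g(x)` for `x > 1`: the ratio `CI₂/CI₁` of full-observation
to 1-dim optimal-projection Chernoff information lies in `[1,2]`. -/
theorem stmt_17 (x : ℝ) (hx : 1 < x) :
    gFun x ≤ hFun x ∧ hFun x ≤ 2 * gFun x := by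
  have hx0 : (0 : ℝ) < x := by linarith
  have hu : (0 : ℝ) < x - 1 := by linarith
  have hL : 0 < Real.log x := Real.log_pos hx
  set L := Real.log x with hLdef
  set t := L / 2 with htdef
  have ht : 0 < t := by positivity
  have hxexp : x = Real.exp (2 * t) := by
    rw [htdef]; ring_nf; rw [hLdef, Real.exp_log hx0]
  -- the key inequality
  have hkey : (1 - t) * x ≤ 1 + t := by rw [hxexp]; exact key_ineq t ht.le
  have hx2t : 2 * t + 1 ≤ x := by
    rw [hxexp]; linarith [Real.add_one_le_exp (2 * t)]
  -- w and its bounds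
  set w := L * (x + 1) / (2 * (x - 1)) with hwdef
  have hw1 : 1 ≤ w := by
    rw [hwdef]
    rw [le_div_iff₀ (by linarith)]
    have : L = 2 * t := by rw [htdef]; ring
    rw [this]; nlinarith
  have hwt : w ≤ t + 1 := by
    rw [hwdef]
    rw [div_le_iff₀ (by linarith)]
    have : L = 2 * t := by rw [htdef]; ring
    rw [this]; nlinarith
  have hw0 : 0 < w := by linarith
  -- sqrt x = exp t
  have hsqrt : Real.sqrt x = Real.exp t := by
    rw [hxexp, show (2 : ℝ) * t = t + t by ring, Real.exp_add]
    exact Real.sqrt_mul_self (Real.exp_pos t).le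
  -- expand hFun
  have hh : hFun x = Real.log (x + 1) - Real.log 2 - t := by
    rw [hFun, Real.log_div (by positivity) (by positivity),
      Real.log_mul (by norm_num) (by positivity), hsqrt, Real.log_exp]
    ring
  -- expand 2 * gFun
  have hg : 2 * gFun x = Real.log (x - 1) - 1 - Real.log L + L / (x - 1) := by
    rw [gFun, Real.log_div (by positivity) (by positivity),
      Real.log_mul (Real.exp_ne_zero 1) (ne_of_gt hL), Real.log_exp]
    ring
  -- log of w
  have hlogw : Real.log w = Real.log L + Real.log (x + 1) - Real.log 2 - Real.log (x - 1) := by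
    rw [hwdef, Real.log_div (by positivity) (by positivity),
      Real.log_mul (ne_of_gt hL) (by positivity),
      Real.log_mul (by norm_num) (ne_of_gt hu)]
    ring
  -- the key identity : 2 * gFun x = hFun x + (w - 1 - log w)
  have hident : 2 * gFun x = hFun x + (w - 1 - Real.log w) := by
    rw [hg, hh, hlogw, hwdef]
    have harith : L * (x + 1) / (2 * (x - 1)) - L / (x - 1) = t := by
      rw [htdef]; field_simp; ring
    linarith [harith]
  constructor
  · -- gFun ≤ hFun  ⟺  w - 1 - log w ≤ hFun x
    have hphi : w - 1 - Real.log w ≤ t - Real.log (t + 1) := by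
      -- φ(w) ≤ φ(t+1) since 1 ≤ w ≤ t+1
      have hlog : Real.log (t + 1) - Real.log w = Real.log ((t + 1) / w) := by
        rw [Real.log_div (by positivity) (ne_of_gt hw0)]
      have h1 : Real.log ((t + 1) / w) ≤ (t + 1) / w - 1 :=
        Real.log_le_sub_one_of_pos (by positivity)
      have h2 : (t + 1) / w - 1 ≤ (t + 1) - w := by
        rw [div_sub_one (ne_of_gt hw0), div_le_iff₀ hw0]
        nlinarith
      linarith [hlog ▸ h1]
    have hfin : t - Real.log (t + 1) ≤ hFun x := by
      rw [hh]
      have hlog2x : Real.log ((t + 1) * (x + 1)) ≥ Real.log (2 * x) := by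
        apply Real.log_le_log (by positivity)
        nlinarith
      rw [Real.log_mul (by positivity) (by positivity),
        Real.log_mul (by norm_num) (ne_of_gt hx0)] at hlog2x
      have : Real.log x = 2 * t := by rw [htdef]; ring
      linarith
    have : w - 1 - Real.log w ≤ hFun x := le_trans hphi hfin
    linarith [hident]
  · -- hFun ≤ 2 gFun : log w ≤ w - 1
    have := Real.log_le_sub_one_of_pos hw0
    linarith [hident]
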